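/- Let N ≥ 2, q = exp(2πi/N) = ω, n = N - 1. Then for invertible complex parameters b, z with appropriate nondegeneracy, the terminating q-hypergeometric transformation holds: ∑_{k=0}^{N-1} ((q^{-(N-1)};q)_k (b;q)_k / (q;q)_k) z^k = (bz/q)^{N-1} ∑_{k=0}^{N-1} ((q^{-(N-1)};q)_k (q/z;q)_k / (q;q)_k) (q/b)^k. -/

import Mathlib

open Complex Finset Polynomial

private lemma aux_roots (N : ℕ) (hN : 0 < N) (q : ℂ) (hprim : IsPrimitiveRoot q N) (x : ℂ) :
    ∏ i ∈ Finset.range N, (x - q ^ i) = x ^ N - 1 := by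
  have h := X_pow_sub_C_eq_prod hprim hN (one_pow N)
  have h2 := congrArg (Polynomial.eval x) h
  simp only [eval_sub, eval_pow, eval_X, eval_one, eval_prod, eval_C, mul_one, eval_mul] at h2
  exact h2.symm

private lemma aux_prodc (N : ℕ) (hN : 0 < N) (q : ℂ) (hprim : IsPrimitiveRoot q N) (c : ℂ) :
    ∏ j ∈ Finset.range N, (1 - c * q ^ j) = 1 - c ^ N := by
  rcases eq_or_ne c 0 with rfl | hc
  · simp [Nat.pos_iff_ne_zero.mp hN]
  · have h := aux_roots N hN q hprim c⁻¹
    calc ∏ j ∈ Finset.range N, (1 - c * q ^ j)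
        = ∏ j ∈ Finset.range N, (c * (c⁻¹ - q ^ j)) := by
          refine Finset.prod_congr rfl fun j _ => ?_
          field_simp
      _ = c ^ N * ((c⁻¹) ^ N - 1) := by
          rw [Finset.prod_mul_distrib, Finset.prod_const, Finset.card_range, h]
      _ = 1 - c ^ N := by
          rw [inv_pow]
          field_simp

private noncomputable def Fq (N : ℕ) (q c w : ℂ) : ℂ :=
  ∑ k ∈ Finset.range N, (∏ j ∈ Finset.range k, (1 - c * q ^ j)) * w ^ k

private noncomputable def Pz (N : ℕ) (q w : ℂ) (j : ℕ) : ℂ := ∏ i ∈ Finset.range j, (w - q ^ (i + 1))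

private noncomputable def Gq (N : ℕ) (q c w : ℂ) : ℂ :=
  ∑ k ∈ Finset.range N, (c * w / q) ^ k * Pz N q w (N - 1 - k)

private lemma aux_stepF (N : ℕ) (hN : 0 < N) (q : ℂ) (hprim : IsPrimitiveRoot q N) (c w : ℂ) :
    Fq N q c w = 1 - (1 - c ^ N) * w ^ N + (1 - c) * w * Fq N q (c * q) w := by
  obtain ⟨n, rfl⟩ : ∃ n, N = n + 1 := ⟨N - 1, by omega⟩
  have h1 : ∀ k, (∏ j ∈ Finset.range (k + 1), (1 - c * q ^ j))
      = (1 - c) * ∏ j ∈ Finset.range k, (1 - c * q * q ^ j) := by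
    intro k
    rw [Finset.prod_range_succ']
    simp only [pow_zero, mul_one]
    rw [mul_comm]
    congr 1
    exact Finset.prod_congr rfl fun j _ => by rw [pow_succ]; ring
  have hprod : (1 - c) * ∏ j ∈ Finset.range n, (1 - c * q * q ^ j) = 1 - c ^ (n + 1) := by
    rw [← h1 n]
    exact aux_prodc (n + 1) hN q hprim c
  unfold Fq
  have e1 : ∑ k ∈ Finset.range (n + 1), (∏ j ∈ Finset.range k, (1 - c * q ^ j)) * w ^ k
      = 1 + (1 - c) * w * ∑ k ∈ Finset.range n,
          (∏ j ∈ Finset.range k, (1 - c * q * q ^ j)) * w ^ k := by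
    rw [Finset.sum_range_succ' (fun k => (∏ j ∈ Finset.range k, (1 - c * q ^ j)) * w ^ k) n]
    rw [Finset.mul_sum]
    simp only [Finset.range_zero, Finset.prod_empty, pow_zero, one_mul, mul_one]
    rw [add_comm]
    congr 1
    exact Finset.sum_congr rfl fun k _ => by rw [h1]; ring
  have e2 : ∑ k ∈ Finset.range (n + 1), (∏ j ∈ Finset.range k, (1 - c * q * q ^ j)) * w ^ k
      = (∑ k ∈ Finset.range n, (∏ j ∈ Finset.range k, (1 - c * q * q ^ j)) * w ^ k)
        + (∏ j ∈ Finset.range n, (1 - c * q * q ^ j)) * w ^ n :=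
    Finset.sum_range_succ _ n
  rw [e1, e2]
  linear_combination (-(w ^ (n + 1))) * hprod

private lemma aux_stepG (N : ℕ) (hN : 0 < N) (q : ℂ) (hprim : IsPrimitiveRoot q N) (c w : ℂ) :
    Gq N q c w = 1 - (1 - c ^ N) * w ^ N + (1 - c) * w * Gq N q (c * q) w := by
  have hq0 : q ≠ 0 := hprim.ne_zero (by omega)
  have hPN : Pz N q w N = w ^ N - 1 := by
    obtain ⟨n, rfl⟩ : ∃ n, N = n + 1 := ⟨N - 1, by omega⟩
    unfold Pz
    rw [Finset.prod_range_succ, hprim.pow_eq_one]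
    have h0 := aux_roots (n + 1) hN q hprim w
    rw [Finset.prod_range_succ'] at h0
    simp only [pow_zero] at h0
    rw [← h0]
  have key : ∀ k < N, (c * w / q) ^ k * Pz N q w (N - 1 - k)
        - (1 - c) * w * ((c * q * w / q) ^ k * Pz N q w (N - 1 - k))
      = c ^ (k + 1) * w ^ (k + 1) * Pz N q w (N - (k + 1))
        - c ^ k * w ^ k * Pz N q w (N - k) := by
    intro k hk
    have hr : q ^ k * q ^ (N - k) = 1 := by
      rw [← pow_add, Nat.add_sub_cancel' (le_of_lt hk)]
      exact hprim.pow_eq_one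
    have hP1 : Pz N q w (N - k) = Pz N q w (N - 1 - k) * (w - q ^ (N - k)) := by
      have e : N - k = (N - 1 - k) + 1 := by omega
      rw [e]
      exact Finset.prod_range_succ _ _
    have hck : (c * w / q) ^ k = (c * w) ^ k * q ^ (N - k) := by
      rw [div_pow, div_eq_iff (pow_ne_zero k hq0)]
      linear_combination (-((c * w) ^ k)) * hr
    have hcq : (c * q * w / q) ^ k = (c * w) ^ k := by
      congr 1
      rw [div_eq_iff hq0]
      ring
    rw [hck, hcq, hP1, show N - (k + 1) = N - 1 - k from by omega]
    ring
  have main : Gq N q c w - (1 - c) * w * Gq N q (c * q) w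
      = c ^ N * w ^ N * Pz N q w (N - N) - c ^ 0 * w ^ 0 * Pz N q w (N - 0) := by
    unfold Gq
    rw [Finset.mul_sum, ← Finset.sum_sub_distrib,
      ← Finset.sum_range_sub (fun k => c ^ k * w ^ k * Pz N q w (N - k)) N]
    exact Finset.sum_congr rfl fun k hk => key k (Finset.mem_range.mp hk)
  rw [Nat.sub_self, Nat.sub_zero] at main
  have hP0 : Pz N q w 0 = 1 := by simp [Pz]
  rw [hP0, hPN] at main
  linear_combination main

private lemma aux_iter (N : ℕ) (hN : 0 < N) (q : ℂ) (hprim : IsPrimitiveRoot q N) (c w : ℂ) :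
    ∀ m : ℕ, Fq N q c w - Gq N q c w
      = w ^ m * (∏ j ∈ Finset.range m, (1 - c * q ^ j))
        * (Fq N q (c * q ^ m) w - Gq N q (c * q ^ m) w)
  | 0 => by simp
  | m + 1 => by
    have ih := aux_iter N hN q hprim c w m
    have hF := aux_stepF N hN q hprim (c * q ^ m) w
    have hG := aux_stepG N hN q hprim (c * q ^ m) w
    rw [ih, hF, hG, Finset.prod_range_succ,
      show c * q ^ m * q = c * q ^ (m + 1) from by rw [pow_succ]; ring]
    ring

private lemma aux_generic (N : ℕ) (hN : 0 < N) (q : ℂ) (hprim : IsPrimitiveRoot q N) (c w : ℂ)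
    (h : w ^ N * (1 - c ^ N) ≠ 1) : Fq N q c w = Gq N q c w := by
  have hit := aux_iter N hN q hprim c w N
  rw [aux_prodc N hN q hprim c, hprim.pow_eq_one, mul_one] at hit
  have h2 : (Fq N q c w - Gq N q c w) * (1 - w ^ N * (1 - c ^ N)) = 0 := by
    linear_combination hit
  rcases mul_eq_zero.mp h2 with h3 | h3
  · exact sub_eq_zero.mp h3
  · exact absurd (sub_eq_zero.mp h3).symm h

private lemma aux_FG (N : ℕ) (hN : 2 ≤ N) (q : ℂ) (hprim : IsPrimitiveRoot q N) (c w : ℂ) :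
    Fq N q c w = Gq N q c w := by
  set p : Polynomial ℂ :=
    (∑ k ∈ Finset.range N, Polynomial.C (∏ j ∈ Finset.range k, (1 - c * q ^ j))
        * Polynomial.X ^ k)
      - ∑ k ∈ Finset.range N, (Polynomial.C (c / q)) ^ k * Polynomial.X ^ k
          * ∏ i ∈ Finset.range (N - 1 - k), (Polynomial.X - Polynomial.C (q ^ (i + 1))) with hp
  have heval : ∀ x : ℂ, p.eval x = Fq N q c x - Gq N q c x := by
    intro x
    simp only [hp, eval_sub, eval_finset_sum, eval_mul, eval_pow, eval_C, eval_X, eval_prod]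
    unfold Fq Gq Pz
    congr 1
    exact Finset.sum_congr rfl fun k _ => by rw [← mul_pow, div_mul_eq_mul_div]
  have hroots : ∀ x : ℂ, x ^ N * (1 - c ^ N) ≠ 1 → p.IsRoot x := fun x hx => by
    rw [Polynomial.IsRoot, heval, aux_generic N (by omega) q hprim c x hx, sub_self]
  have hfin : Set.Finite {x : ℂ | x ^ N * (1 - c ^ N) = 1} := by
    have hr : (Polynomial.C (1 - c ^ N) * Polynomial.X ^ N - Polynomial.C 1 : Polynomial ℂ)
        ≠ 0 := by
      intro h
      have h0 := congrArg (fun r : Polynomial ℂ => Polynomial.coeff r 0) h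
      simp only [Polynomial.coeff_sub, Polynomial.coeff_C_mul, Polynomial.coeff_X_pow,
        Polynomial.coeff_zero, Polynomial.coeff_C, if_neg (show ¬ (0 = N) by omega),
        if_pos rfl, mul_zero, zero_sub, neg_eq_zero, one_ne_zero] at h0
      simp at h0
    refine (Polynomial.finite_setOf_isRoot hr).subset ?_
    intro x hx
    simp only [Set.mem_setOf_eq, Polynomial.IsRoot, Polynomial.eval_sub, Polynomial.eval_mul,
      Polynomial.eval_pow, Polynomial.eval_C, Polynomial.eval_X, Polynomial.eval_one]
    have hx' : x ^ N * (1 - c ^ N) = 1 := hx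
    linear_combination hx'
  have hpz : p = 0 := by
    apply Polynomial.eq_zero_of_infinite_isRoot
    refine Set.Infinite.mono ?_ hfin.infinite_compl
    intro x hx
    exact hroots x hx
  have h := heval w
  rw [hpz] at h
  simp only [Polynomial.eval_zero] at h
  exact sub_eq_zero.mp h.symm

private lemma aux_final (N : ℕ) (hN : 2 ≤ N) (q : ℂ) (hprim : IsPrimitiveRoot q N)
    (b z : ℂ) (hb : b ≠ 0) (hz : z ≠ 0) :
    (b * z / q) ^ (N - 1) * Gq N q (q / z) (q / b) = Fq N q b z := by
  have hq0 : q ≠ 0 := hprim.ne_zero (by omega)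
  have hA : b * z / q ≠ 0 := div_ne_zero (mul_ne_zero hb hz) hq0
  unfold Gq Fq
  simp only [Pz]
  rw [Finset.mul_sum, ← Finset.sum_range_reflect]
  refine Finset.sum_congr rfl fun k hk => ?_
  have hk' : k < N := Finset.mem_range.mp hk
  rw [show N - 1 - (N - 1 - k) = k from by omega]
  have e2 : q / z * (q / b) / q = (b * z / q)⁻¹ := by
    field_simp
  rw [e2, ← mul_assoc]
  have e3 : (b * z / q) ^ (N - 1) * ((b * z / q)⁻¹) ^ (N - 1 - k) = (b * z / q) ^ k := by
    rw [inv_pow, show N - 1 = (N - 1 - k) + k from by omega, pow_add,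
      show (N - 1 - k) + k - k = N - 1 - k from by omega]
    field_simp
  rw [e3]
  have e5 : (b * z / q) ^ k = ∏ _i ∈ Finset.range k, (b * z / q) := by
    rw [Finset.prod_const, Finset.card_range]
  rw [e5, ← Finset.prod_mul_distrib,
    Finset.prod_congr rfl (fun i (_ : i ∈ Finset.range k) =>
      show b * z / q * (q / b - q ^ (i + 1)) = (1 - b * q ^ i) * z from by
        field_simp
        ring),
    Finset.prod_mul_distrib, Finset.prod_const, Finset.card_range]

/-- The terminating q-hypergeometric transformation (c → 0 limit of Gasper–Rahman
III.6) at `q = ω = exp(2πi/N)`, `n = N-1`: for nonzero `b, z`,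
`∑_{k=0}^{N-1} (q^{-(N-1)};q)_k (b;q)_k z^k/(q;q)_k
  = (bz/q)^{N-1} ∑_{k=0}^{N-1} (q^{-(N-1)};q)_k (q/z;q)_k (q/b)^k/(q;q)_k`,
where `(a;q)_k = ∏_{j=0}^{k-1}(1 - a q^j)`. -/
theorem stmt_15 (N : ℕ) (hN : 2 ≤ N)
    (q : ℂ) (hq : q = Complex.exp (2 * Real.pi * I / N))
    (qp : ℂ → ℕ → ℂ) (hqp : ∀ a k, qp a k = ∏ j ∈ Finset.range k, (1 - a * q ^ j))
    (b z : ℂ) (hb : b ≠ 0) (hz : z ≠ 0) :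
    ∑ k ∈ Finset.range N, qp (q⁻¹ ^ (N - 1)) k * qp b k / qp q k * z ^ k
      = (b * z / q) ^ (N - 1) *
        ∑ k ∈ Finset.range N,
          qp (q⁻¹ ^ (N - 1)) k * qp (q / z) k / qp q k * (q / b) ^ k := by
  have hprim : IsPrimitiveRoot q N := by
    rw [hq]; exact Complex.isPrimitiveRoot_exp N (by omega)
  have hq0 : q ≠ 0 := hprim.ne_zero (by omega)
  have hqN : q ^ N = 1 := hprim.pow_eq_one
  have hqinv : q⁻¹ ^ (N - 1) = q := by
    have h1 : q ^ (N - 1) * q = 1 := by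
      rw [← pow_succ, show N - 1 + 1 = N from by omega]; exact hqN
    rw [inv_pow]
    exact inv_eq_of_mul_eq_one_left (by rw [mul_comm]; exact h1)
  have hQk : ∀ k, k < N → qp q k ≠ 0 := by
    intro k hk
    rw [hqp]
    refine Finset.prod_ne_zero_iff.mpr fun j hj => ?_
    intro h
    have hj' : j < k := Finset.mem_range.mp hj
    have h2 : q ^ (j + 1) = 1 := by rw [pow_succ]; linear_combination -h
    exact hprim.pow_ne_one_of_pos_of_lt (Nat.succ_ne_zero j) (by omega) h2
  have hcancel : ∀ (a x : ℂ),
      ∑ k ∈ Finset.range N, qp q k * qp a k / qp q k * x ^ k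
        = ∑ k ∈ Finset.range N, (∏ j ∈ Finset.range k, (1 - a * q ^ j)) * x ^ k := by
    intro a x
    refine Finset.sum_congr rfl fun k hk => ?_
    rw [mul_comm (qp q k) (qp a k), mul_div_assoc,
      div_self (hQk k (Finset.mem_range.mp hk)), mul_one, hqp]
  rw [hqinv, hcancel b z, hcancel (q / z) (q / b)]
  rw [show (∑ k ∈ Finset.range N,
      (∏ j ∈ Finset.range k, (1 - q / z * q ^ j)) * (q / b) ^ k) = Fq N q (q / z) (q / b)
    from rfl]
  rw [aux_FG N hN q hprim (q / z) (q / b), aux_final N hN q hprim b z hb hz]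
  rfl
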